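/- Let v ∈ ℝ, t₀ ≥ 1, M ≥ 0, and let γ : [t₀, ∞) → ℂ be differentiable and e : [t₀, ∞) → ℂ satisfy, for all t ≥ t₀, γ'(t) = −(8iv⁵/(81t))·γ(t)·|γ(t)|² + e(t) and |e(t)| ≤ M·t^{−19/18}. Then for all t ≥ t₀, |γ(t)| ≤ |γ(t₀)| + 18·M·t₀^{−1/18}. -/

import Mathlib

open Complex

/-- Integrating the asymptotic wave-packet ODE `γ' = −(8iv⁵/(81t)) γ|γ|² + e(t)` with
`|e(t)| ≤ M t^{−19/18}` on `[t₀, ∞)`, `t₀ ≥ 1`, gives the uniform bound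
`|γ(t)| ≤ |γ(t₀)| + 18 M t₀^{−1/18}`. -/
theorem wave_packet_ode_uniform_bound
    (v t₀ M : ℝ) (ht₀ : 1 ≤ t₀) (hM : 0 ≤ M) (γ e : ℝ → ℂ)
    (hODE : ∀ t, t₀ ≤ t → HasDerivAt γ
      (-(8 * Complex.I * (v:ℂ)^5 / (81 * (t:ℂ))) * γ t * ((‖γ t‖ : ℂ))^2 + e t) t)
    (he : ∀ t, t₀ ≤ t → ‖e t‖ ≤ M * t ^ (-(19 : ℝ)/18)) :
    ∀ t, t₀ ≤ t → ‖γ t‖ ≤ ‖γ t₀‖ + 18 * M * t₀ ^ (-(1 : ℝ)/18) := by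
  have ht₀pos : (0:ℝ) < t₀ := lt_of_lt_of_le one_pos ht₀
  -- phase function
  set g : ℝ → ℝ := fun s => 8 * v ^ 5 / (81 * s) * ‖γ s‖ ^ 2 with hg_def
  set θ : ℝ → ℝ := fun t => ∫ s in t₀..t, g s with hθ_def
  set φ : ℝ → ℂ := fun t => Complex.exp (Complex.I * (θ t : ℂ)) * γ t with hφ_def
  set B : ℝ → ℝ :=
    fun t => ‖γ t₀‖ + 18 * M * (t₀ ^ (-(1:ℝ)/18) - t ^ (-(1:ℝ)/18)) with hB_def
  -- continuity of γ on [t₀, ∞)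
  have hγc : ∀ t, t₀ ≤ t → ContinuousAt γ t := fun t ht =>
    (hODE t ht).differentiableAt.continuousAt
  have hgcont : ContinuousOn g (Set.Ici t₀) := by
    apply ContinuousOn.mul
    · apply ContinuousOn.div continuousOn_const
      · exact (continuous_const.mul continuous_id).continuousOn
      · intro s hs
        have : (0:ℝ) < s := lt_of_lt_of_le ht₀pos hs
        positivity
    · exact fun s hs => ((hγc s hs).norm.pow 2).continuousWithinAt
  -- norm of the phase factor is 1
  have hexp1 : ∀ t : ℝ, ‖Complex.exp (Complex.I * (θ t : ℂ))‖ = 1 := by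
    intro t
    rw [Complex.norm_exp]
    simp [Complex.mul_re]
  have hφnorm : ∀ t, ‖φ t‖ = ‖γ t‖ := by
    intro t
    rw [hφ_def]
    simp only [norm_mul, hexp1, one_mul]
  -- the main estimate, on each interval [t₀, x]
  intro x hx
  have hgint : ∀ t ∈ Set.Icc t₀ x, IntervalIntegrable g MeasureTheory.volume t₀ t := by
    intro t ht
    apply ContinuousOn.intervalIntegrable
    rw [Set.uIcc_of_le ht.1]
    exact hgcont.mono (fun s hs => hs.1)
  -- θ has right derivative g t at each t ∈ [t₀, x)
  have hθ' : ∀ t ∈ Set.Ico t₀ x, HasDerivWithinAt θ (g t) (Set.Ici t) t := by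
    intro t ht
    have hmeas : StronglyMeasurableAtFilter g (nhdsWithin t (Set.Ioi t)) :=
      ⟨Set.Ici t₀, Filter.mem_of_superset self_mem_nhdsWithin
        (fun s hs => le_trans ht.1 (le_of_lt hs)),
        hgcont.aestronglyMeasurable measurableSet_Ici⟩
    have hcw : ContinuousWithinAt g (Set.Ioi t) t :=
      (hgcont t ht.1).mono (fun s hs => le_trans ht.1 (le_of_lt hs))
    exact intervalIntegral.integral_hasDerivWithinAt_right
      (hgint t ⟨ht.1, ht.2.le⟩) hmeas hcw
  -- φ has right derivative exp(iθ t) * e t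
  have hφ' : ∀ t ∈ Set.Ico t₀ x,
      HasDerivWithinAt φ (Complex.exp (Complex.I * (θ t : ℂ)) * e t) (Set.Ici t) t := by
    intro t ht
    have h1 : HasDerivWithinAt (fun s => ((θ s : ℝ) : ℂ)) ((g t : ℂ)) (Set.Ici t) t := by
      exact (hθ' t ht).ofReal_comp
    have h2 := (h1.const_mul Complex.I).cexp
    have h3 := h2.mul ((hODE t ht.1).hasDerivWithinAt)
    refine h3.congr_deriv ?_
    have htpos : (0:ℝ) < t := lt_of_lt_of_le ht₀pos ht.1
    have htne : (t:ℂ) ≠ 0 := by exact_mod_cast ne_of_gt htpos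
    rw [hg_def]
    push_cast
    field_simp
    ring
  -- B has derivative M * t^(-19/18)
  have hB' : ∀ t ∈ Set.Ico t₀ x,
      HasDerivWithinAt B (M * t ^ (-(19:ℝ)/18)) (Set.Ici t) t := by
    intro t ht
    have htpos : (0:ℝ) < t := lt_of_lt_of_le ht₀pos ht.1
    have hr : HasDerivAt (fun s : ℝ => s ^ (-(1:ℝ)/18))
        ((-(1:ℝ)/18) * t ^ ((-(1:ℝ)/18) - 1)) t :=
      Real.hasDerivAt_rpow_const (Or.inl (ne_of_gt htpos))
    have hB : HasDerivAt B (18 * M * (0 - (-(1:ℝ)/18) * t ^ ((-(1:ℝ)/18) - 1))) t := by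
      exact (((hasDerivAt_const t (t₀ ^ (-(1:ℝ)/18))).sub hr).const_mul (18*M)).const_add _
    have hexp : ((-(1:ℝ)/18) - 1) = -(19:ℝ)/18 := by norm_num
    rw [hexp] at hB
    have : 18 * M * (0 - (-(1:ℝ)/18) * t ^ (-(19:ℝ)/18)) = M * t ^ (-(19:ℝ)/18) := by ring
    rw [this] at hB
    exact hB.hasDerivWithinAt
  -- continuity of φ on [t₀, x]
  have hθcont : ContinuousOn θ (Set.Icc t₀ x) := by
    have := intervalIntegral.continuousOn_primitive_interval
      (μ := MeasureTheory.volume) (f := g) (a := t₀) (b := x)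
      (by
        rw [Set.uIcc_of_le hx]
        exact (hgcont.mono (fun s hs => hs.1)).integrableOn_compact isCompact_Icc)
    rwa [Set.uIcc_of_le hx] at this
  have hφcont : ContinuousOn φ (Set.Icc t₀ x) := by
    apply ContinuousOn.mul
    · exact (Complex.continuous_exp.comp
        (continuous_const.mul Complex.continuous_ofReal)).comp_continuousOn hθcont
    · exact fun s hs => (hγc s hs.1).continuousWithinAt
  have hBcont : ContinuousOn B (Set.Icc t₀ x) := by
    apply continuousOn_const.add
    apply continuousOn_const.mul
    apply continuousOn_const.sub
    intro s hs
    exact (Real.continuousAt_rpow_const s _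
      (Or.inl (ne_of_gt (lt_of_lt_of_le ht₀pos hs.1)))).continuousWithinAt
  -- initial bound
  have ha : ‖φ t₀‖ ≤ B t₀ := by
    rw [hφnorm, hB_def]
    simp
  -- derivative bound
  have hbound : ∀ t ∈ Set.Ico t₀ x,
      ‖Complex.exp (Complex.I * (θ t : ℂ)) * e t‖ ≤ M * t ^ (-(19:ℝ)/18) := by
    intro t ht
    rw [norm_mul, hexp1, one_mul]
    exact he t ht.1
  have main := image_norm_le_of_norm_deriv_right_le_deriv_boundary'
    hφcont hφ' ha hBcont hB' hbound (Set.mem_Icc.2 ⟨hx, le_refl x⟩)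
  rw [hφnorm] at main
  refine main.trans ?_
  rw [hB_def]
  have h1 : 0 ≤ x ^ (-(1:ℝ)/18) := Real.rpow_nonneg (by linarith) _
  nlinarith [mul_nonneg (by linarith : (0:ℝ) ≤ 18*M) h1]
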